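/- Let 𝔤 be a finite-dimensional real Lie algebra, U ⊆ ℝ³ open, and let A, E : ℝ × U → (Fin 3 → 𝔤) be smooth and satisfy the Yang–Mills evolution equations in temporal gauge: ∂_t A = −E and ∂_t E = curl B + ⋆[A,B] on ℝ × U, where B(t,·) := curl A(t,·) + (1/2) • ⋆[A(t,·),A(t,·)] (spatial derivatives). Then for every x ∈ U the constraint quantity t ↦ (div E(t,·))(x) + ⋆[A(t,x), ⋆E(t,x)] is constant in t; in particular, if div E + ⋆[A,⋆E] = 0 holds at t = 0 then it holds for all t. -/

import Mathlib

open scoped BigOperators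

/-- The Levi-Civita symbol on three indices (totally antisymmetric, `ε 0 1 2 = 1`). -/
noncomputable def levicivita (i j k : Fin 3) : ℝ :=
  (((j : ℕ) : ℝ) - ((i : ℕ) : ℝ)) * (((k : ℕ) : ℝ) - ((j : ℕ) : ℝ)) *
    (((k : ℕ) : ℝ) - ((i : ℕ) : ℝ)) / 2

/-- The partial derivative `∂_μ f` on `ℝ³`. -/
noncomputable def pderiv3 {E : Type*} [NormedAddCommGroup E] [NormedSpace ℝ E]
    (μ : Fin 3) (f : EuclideanSpace ℝ (Fin 3) → E) (x : EuclideanSpace ℝ (Fin 3)) : E :=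
  fderiv ℝ f x (EuclideanSpace.single μ 1)

/-- The gradient of a `𝔤`-valued function on `ℝ³`. -/
noncomputable def grad3 {𝔤 : Type*} [NormedAddCommGroup 𝔤] [NormedSpace ℝ 𝔤]
    (q : EuclideanSpace ℝ (Fin 3) → 𝔤) (x : EuclideanSpace ℝ (Fin 3)) : Fin 3 → 𝔤 :=
  fun μ => pderiv3 μ q x

/-- The curl of a `𝔤`-valued vector field on `ℝ³`:
`(curl A)(α) = Σ_{μ,ν} ε(α,μ,ν) • ∂_μ A(ν)`. -/
noncomputable def curl3 {𝔤 : Type*} [NormedAddCommGroup 𝔤] [NormedSpace ℝ 𝔤]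
    (A : EuclideanSpace ℝ (Fin 3) → Fin 3 → 𝔤) (x : EuclideanSpace ℝ (Fin 3)) :
    Fin 3 → 𝔤 :=
  fun α => ∑ μ : Fin 3, ∑ ν : Fin 3, levicivita α μ ν • pderiv3 μ (fun y => A y ν) x

/-- The divergence of a `𝔤`-valued vector field on `ℝ³`: `div A = Σ_μ ∂_μ A(μ)`. -/
noncomputable def div3 {𝔤 : Type*} [NormedAddCommGroup 𝔤] [NormedSpace ℝ 𝔤]
    (A : EuclideanSpace ℝ (Fin 3) → Fin 3 → 𝔤) (x : EuclideanSpace ℝ (Fin 3)) : 𝔤 :=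
  ∑ μ : Fin 3, pderiv3 μ (fun y => A y μ) x

/-- The cross-bracket `⋆[v,w](α) = Σ_{μ,ν} ε(α,μ,ν) • ⁅v(μ), w(ν)⁆`, where the Lie
bracket of `𝔤` is the continuous bilinear map `br`. -/
noncomputable def crossBr {𝔤 : Type*} [NormedAddCommGroup 𝔤] [NormedSpace ℝ 𝔤]
    (br : 𝔤 →L[ℝ] 𝔤 →L[ℝ] 𝔤) (v w : Fin 3 → 𝔤) : Fin 3 → 𝔤 :=
  fun α => ∑ μ : Fin 3, ∑ ν : Fin 3, levicivita α μ ν • br (v μ) (w ν)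

/-- The dot-bracket `⋆[v,⋆w] = Σ_α ⁅v(α), w(α)⁆`, where the Lie bracket of `𝔤` is the
continuous bilinear map `br`. -/
noncomputable def dotBr {𝔤 : Type*} [NormedAddCommGroup 𝔤] [NormedSpace ℝ 𝔤]
    (br : 𝔤 →L[ℝ] 𝔤 →L[ℝ] 𝔤) (v w : Fin 3 → 𝔤) : 𝔤 :=
  ∑ α : Fin 3, br (v α) (w α)

/-! ### Auxiliary lemmas -/

section YMAux

variable {H 𝔤 : Type*} [NormedAddCommGroup H] [NormedSpace ℝ H]
  [NormedAddCommGroup 𝔤] [NormedSpace ℝ 𝔤]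

lemma YM.top_add_one_le : ((⊤:ℕ∞) : WithTop ℕ∞) + 1 ≤ ((⊤:ℕ∞) : WithTop ℕ∞) := by norm_num

lemma YM.two_le_top : (2 : WithTop ℕ∞) ≤ ((⊤:ℕ∞) : WithTop ℕ∞) := by
  rw [show ((2:WithTop ℕ∞)) = ((2:ℕ∞):WithTop ℕ∞) from rfl]
  exact_mod_cast le_top

lemma YM.one_le_top : (1 : WithTop ℕ∞) ≤ ((⊤:ℕ∞) : WithTop ℕ∞) :=
  le_trans (by norm_num) YM.top_add_one_le

lemma YM.hasFDerivAt_fderiv_apply {f : H → 𝔤} {x : H} (hf : ContDiffAt ℝ (⊤:ℕ∞) f x) (v : H) :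
    HasFDerivAt (fun y => fderiv ℝ f y v) ((fderiv ℝ (fderiv ℝ f) x).flip v) x := by
  have hd : DifferentiableAt ℝ (fderiv ℝ f) x :=
    (hf.fderiv_right (m := ((⊤:ℕ∞) : WithTop ℕ∞)) YM.top_add_one_le).differentiableAt
      (by simp)
  have h := hd.hasFDerivAt.clm_apply (hasFDerivAt_const v x)
  simpa using h

lemma YM.fderiv_fderiv_symm {f : H → 𝔤} {x : H} (hf : ContDiffAt ℝ (⊤:ℕ∞) f x) (v w : H) :
    fderiv ℝ (fderiv ℝ f) x v w = fderiv ℝ (fderiv ℝ f) x w v :=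
  hf.isSymmSndFDerivAt (by rw [minSmoothness_of_isRCLikeNormedField]; exact YM.two_le_top) v w

variable {g : ℝ × EuclideanSpace ℝ (Fin 3) → 𝔤}

/-- time slice derivative -/
lemma YM.hasDerivAt_slice {t : ℝ} {y : EuclideanSpace ℝ (Fin 3)}
    (hg : DifferentiableAt ℝ g (t, y)) :
    HasDerivAt (fun s => g (s, y)) (fderiv ℝ g (t, y) (1, 0)) t := by
  have hline : HasDerivAt (fun s : ℝ => (s, y)) ((1:ℝ), (0:EuclideanSpace ℝ (Fin 3))) t :=
    (hasDerivAt_id t).prodMk (hasDerivAt_const t y)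
  exact (hg.hasFDerivAt.comp_hasDerivAt t hline)

/-- space slice derivative -/
lemma YM.pderiv3_slice {s : ℝ} {x : EuclideanSpace ℝ (Fin 3)}
    (hg : DifferentiableAt ℝ g (s, x)) (μ : Fin 3) :
    pderiv3 μ (fun y => g (s, y)) x = fderiv ℝ g (s, x) (0, EuclideanSpace.single μ 1) := by
  have hline : HasFDerivAt (fun y : EuclideanSpace ℝ (Fin 3) => ((s:ℝ), y))
      ((0 : EuclideanSpace ℝ (Fin 3) →L[ℝ] ℝ).prod (ContinuousLinearMap.id ℝ _)) x :=
    (hasFDerivAt_const s x).prodMk (hasFDerivAt_id x)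
  have h := (hg.hasFDerivAt.comp x hline)
  have h' : HasFDerivAt (fun y => g (s, y))
      ((fderiv ℝ g (s, x)).comp ((0 : EuclideanSpace ℝ (Fin 3) →L[ℝ] ℝ).prod
        (ContinuousLinearMap.id ℝ _))) x := h
  rw [pderiv3, h'.fderiv]
  simp

/-- Exchange of time and space derivatives. -/
lemma YM.hasDerivAt_pderiv3_slice {U : Set (EuclideanSpace ℝ (Fin 3))} (hU : IsOpen U)
    (hg : ContDiffOn ℝ (⊤:ℕ∞) g (Set.univ ×ˢ U)) {x} (hx : x ∈ U) (t : ℝ) (μ : Fin 3) :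
    HasDerivAt (fun s => pderiv3 μ (fun y => g (s, y)) x)
      (pderiv3 μ (fun y => deriv (fun s => g (s, y)) t) x) t := by
  set w : ℝ × EuclideanSpace ℝ (Fin 3) := (0, EuclideanSpace.single μ 1) with hw
  set tv : ℝ × EuclideanSpace ℝ (Fin 3) := (1, 0) with htv
  have hV : IsOpen (Set.univ ×ˢ U : Set (ℝ × EuclideanSpace ℝ (Fin 3))) := isOpen_univ.prod hU
  have hat : ∀ s : ℝ, ∀ y ∈ U, ContDiffAt ℝ (⊤:ℕ∞) g (s, y) := fun s y hy =>
    hg.contDiffAt (hV.mem_nhds (by simp [hy]))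
  have hdiff : ∀ s : ℝ, ∀ y ∈ U, DifferentiableAt ℝ g (s, y) := fun s y hy =>
    (hat s y hy).differentiableAt (by simp)
  have funeq : (fun s => pderiv3 μ (fun y => g (s, y)) x) = fun s => fderiv ℝ g (s, x) w := by
    funext s; exact YM.pderiv3_slice (hdiff s x hx) μ
  have hd : DifferentiableAt ℝ (fderiv ℝ g) (t, x) :=
    ((hat t x hx).fderiv_right (m := ((⊤:ℕ∞) : WithTop ℕ∞)) YM.top_add_one_le).differentiableAt
      (by simp)
  have hline : HasDerivAt (fun s : ℝ => (s, x)) tv t :=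
    (hasDerivAt_id t).prodMk (hasDerivAt_const t x)
  have h1 : HasDerivAt (fun s => fderiv ℝ g (s, x)) (fderiv ℝ (fderiv ℝ g) (t, x) tv) t :=
    hd.hasFDerivAt.comp_hasDerivAt t hline
  have h2 : HasDerivAt (fun s => fderiv ℝ g (s, x) w)
      (fderiv ℝ (fderiv ℝ g) (t, x) tv w) t := by
    simpa using h1.clm_apply (hasDerivAt_const t w)
  have ev : (fun y => deriv (fun s => g (s, y)) t) =ᶠ[nhds x]
      (fun y => fderiv ℝ g (t, y) tv) := by
    filter_upwards [hU.mem_nhds hx] with y hy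
    exact (YM.hasDerivAt_slice (hdiff t y hy)).deriv
  have e4 : pderiv3 μ (fun y => deriv (fun s => g (s, y)) t) x
      = fderiv ℝ (fderiv ℝ g) (t, x) w tv := by
    rw [pderiv3, ev.fderiv_eq]
    have hline2 : HasFDerivAt (fun y : EuclideanSpace ℝ (Fin 3) => ((t:ℝ), y))
        ((0 : EuclideanSpace ℝ (Fin 3) →L[ℝ] ℝ).prod (ContinuousLinearMap.id ℝ _)) x :=
      (hasFDerivAt_const t x).prodMk (hasFDerivAt_id x)
    have h5 := (YM.hasFDerivAt_fderiv_apply (hat t x hx) tv).comp x hline2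
    have h5' : HasFDerivAt (fun y => fderiv ℝ g (t, y) tv)
        (((fderiv ℝ (fderiv ℝ g) (t, x)).flip tv).comp
          ((0 : EuclideanSpace ℝ (Fin 3) →L[ℝ] ℝ).prod (ContinuousLinearMap.id ℝ _))) x := h5
    rw [h5'.fderiv]
    simp [hw]
  rw [funeq, e4, YM.fderiv_fderiv_symm (hat t x hx) w tv]
  exact h2

/-! spatial lemmas -/

variable {x : EuclideanSpace ℝ (Fin 3)}

lemma YM.pderiv3_congr_nhds {f g : EuclideanSpace ℝ (Fin 3) → 𝔤} (h : f =ᶠ[nhds x] g)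
    (μ : Fin 3) : pderiv3 μ f x = pderiv3 μ g x := by
  rw [pderiv3, pderiv3, h.fderiv_eq]

lemma YM.pderiv3_add {f g : EuclideanSpace ℝ (Fin 3) → 𝔤} (hf : DifferentiableAt ℝ f x)
    (hg : DifferentiableAt ℝ g x) (μ : Fin 3) :
    pderiv3 μ (fun y => f y + g y) x = pderiv3 μ f x + pderiv3 μ g x := by
  rw [pderiv3, fderiv_fun_add hf hg]; rfl

lemma YM.pderiv3_smul {f : EuclideanSpace ℝ (Fin 3) → 𝔤} (hf : DifferentiableAt ℝ f x)
    (c : ℝ) (μ : Fin 3) :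
    pderiv3 μ (fun y => c • f y) x = c • pderiv3 μ f x := by
  rw [pderiv3, fderiv_fun_const_smul hf]; rfl

lemma YM.pderiv3_sum {ι : Type*} (s : Finset ι) (F : ι → EuclideanSpace ℝ (Fin 3) → 𝔤)
    (h : ∀ i ∈ s, DifferentiableAt ℝ (F i) x) (μ : Fin 3) :
    pderiv3 μ (fun y => ∑ i ∈ s, F i y) x = ∑ i ∈ s, pderiv3 μ (F i) x := by
  rw [pderiv3, fderiv_fun_sum h]
  simp [pderiv3]

lemma YM.pderiv3_br (br : 𝔤 →L[ℝ] 𝔤 →L[ℝ] 𝔤) {f g : EuclideanSpace ℝ (Fin 3) → 𝔤}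
    (hf : DifferentiableAt ℝ f x) (hg : DifferentiableAt ℝ g x) (μ : Fin 3) :
    pderiv3 μ (fun y => br (f y) (g y)) x
      = br (pderiv3 μ f x) (g x) + br (f x) (pderiv3 μ g x) := by
  have hc : HasFDerivAt (fun y => br (f y)) (br.comp (fderiv ℝ f x)) x :=
    br.hasFDerivAt.comp x hf.hasFDerivAt
  have h := hc.clm_apply hg.hasFDerivAt
  rw [pderiv3, h.fderiv]
  simp only [pderiv3, ContinuousLinearMap.add_apply, ContinuousLinearMap.comp_apply,
    ContinuousLinearMap.flip_apply]
  abel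

lemma YM.diffAt_br (br : 𝔤 →L[ℝ] 𝔤 →L[ℝ] 𝔤) {f g : EuclideanSpace ℝ (Fin 3) → 𝔤}
    (hf : DifferentiableAt ℝ f x) (hg : DifferentiableAt ℝ g x) :
    DifferentiableAt ℝ (fun y => br (f y) (g y)) x :=
  (br.differentiable.differentiableAt.comp x hf).clm_apply hg

lemma YM.contDiffAt_br (br : 𝔤 →L[ℝ] 𝔤 →L[ℝ] 𝔤) {f g : EuclideanSpace ℝ (Fin 3) → 𝔤}
    (hf : ContDiffAt ℝ (⊤:ℕ∞) f x) (hg : ContDiffAt ℝ (⊤:ℕ∞) g x) :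
    ContDiffAt ℝ (⊤:ℕ∞) (fun y => br (f y) (g y)) x :=
  (br.contDiff.contDiffAt.comp x hf).clm_apply hg

lemma YM.contDiffAt_pderiv3 {f : EuclideanSpace ℝ (Fin 3) → 𝔤}
    (hf : ContDiffAt ℝ (⊤:ℕ∞) f x) (ρ : Fin 3) :
    ContDiffAt ℝ (⊤:ℕ∞) (fun y => pderiv3 ρ f y) x :=
  (hf.fderiv_right (m := ((⊤:ℕ∞) : WithTop ℕ∞)) YM.top_add_one_le).clm_apply contDiffAt_const

lemma YM.pderiv3_pderiv3_comm {f : EuclideanSpace ℝ (Fin 3) → 𝔤}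
    (hf : ContDiffAt ℝ (⊤:ℕ∞) f x) (μ ρ : Fin 3) :
    pderiv3 μ (fun y => pderiv3 ρ f y) x = pderiv3 ρ (fun y => pderiv3 μ f y) x := by
  simp only [pderiv3]
  rw [(YM.hasFDerivAt_fderiv_apply hf (EuclideanSpace.single ρ 1)).fderiv,
    (YM.hasFDerivAt_fderiv_apply hf (EuclideanSpace.single μ 1)).fderiv]
  simp only [ContinuousLinearMap.flip_apply]
  exact YM.fderiv_fderiv_symm hf _ _

lemma YM.lc_swap (i j k : Fin 3) : levicivita j i k = - levicivita i j k := by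
  unfold levicivita; ring

lemma YM.eps_sym_sum_zero {M : Type*} [AddCommGroup M] [Module ℝ M]
    (Q : Fin 3 → Fin 3 → Fin 3 → M) (hQ : ∀ μ ρ ν, Q μ ρ ν = Q ρ μ ν) :
    ∑ μ : Fin 3, ∑ ρ : Fin 3, ∑ ν : Fin 3, levicivita μ ρ ν • Q μ ρ ν = 0 := by
  have h : (∑ μ : Fin 3, ∑ ρ : Fin 3, ∑ ν : Fin 3, levicivita μ ρ ν • Q μ ρ ν)
      = - ∑ μ : Fin 3, ∑ ρ : Fin 3, ∑ ν : Fin 3, levicivita μ ρ ν • Q μ ρ ν := by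
    nth_rewrite 1 [Finset.sum_comm]
    rw [← Finset.sum_neg_distrib]
    refine Finset.sum_congr rfl fun ρ _ => ?_
    rw [← Finset.sum_neg_distrib]
    refine Finset.sum_congr rfl fun μ _ => ?_
    rw [← Finset.sum_neg_distrib]
    refine Finset.sum_congr rfl fun ν _ => ?_
    rw [hQ μ ρ ν, YM.lc_swap ρ μ ν, neg_smul]
  have h2 : (2:ℝ) • (∑ μ : Fin 3, ∑ ρ : Fin 3, ∑ ν : Fin 3, levicivita μ ρ ν • Q μ ρ ν) = 0 := by
    rw [two_smul]
    nth_rewrite 2 [h]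
    exact add_neg_cancel _
  have := smul_eq_zero.mp h2
  simpa using this

lemma YM.div3_curl3 {f : EuclideanSpace ℝ (Fin 3) → Fin 3 → 𝔤} {U : Set (EuclideanSpace ℝ (Fin 3))}
    (hU : IsOpen U) (hx : x ∈ U)
    (hf : ∀ ν : Fin 3, ∀ y ∈ U, ContDiffAt ℝ (⊤:ℕ∞) (fun z => f z ν) y) :
    div3 (curl3 f) x = 0 := by
  have key : ∀ μ : Fin 3, pderiv3 μ (fun y => curl3 f y μ) x
      = ∑ ρ : Fin 3, ∑ ν : Fin 3, levicivita μ ρ ν •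
          pderiv3 μ (fun y => pderiv3 ρ (fun z => f z ν) y) x := by
    intro μ
    have e1 : pderiv3 μ (fun y => curl3 f y μ) x
        = ∑ ρ : Fin 3, pderiv3 μ
            (fun y => ∑ ν : Fin 3, levicivita μ ρ ν • pderiv3 ρ (fun z => f z ν) y) x :=
      YM.pderiv3_sum Finset.univ
        (fun ρ y => ∑ ν : Fin 3, levicivita μ ρ ν • pderiv3 ρ (fun z => f z ν) y)
        (fun ρ _ => DifferentiableAt.fun_sum fun ν _ =>
          ((YM.contDiffAt_pderiv3 (hf ν x hx) ρ).differentiableAt (by simp)).const_smul _) μ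
    rw [e1]
    refine Finset.sum_congr rfl fun ρ _ => ?_
    have e2 : pderiv3 μ (fun y => ∑ ν : Fin 3, levicivita μ ρ ν • pderiv3 ρ (fun z => f z ν) y) x
        = ∑ ν : Fin 3, pderiv3 μ (fun y => levicivita μ ρ ν • pderiv3 ρ (fun z => f z ν) y) x :=
      YM.pderiv3_sum Finset.univ
        (fun ν y => levicivita μ ρ ν • pderiv3 ρ (fun z => f z ν) y)
        (fun ν _ =>
          ((YM.contDiffAt_pderiv3 (hf ν x hx) ρ).differentiableAt (by simp)).const_smul _) μ
    rw [e2]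
    refine Finset.sum_congr rfl fun ν _ => ?_
    exact YM.pderiv3_smul
      ((YM.contDiffAt_pderiv3 (hf ν x hx) ρ).differentiableAt (by simp)) _ μ
  rw [div3]
  rw [Finset.sum_congr rfl fun μ _ => key μ]
  exact YM.eps_sym_sum_zero _ (fun μ ρ ν => YM.pderiv3_pderiv3_comm (hf ν x hx) μ ρ)

lemma YM.div3_crossBr (br : 𝔤 →L[ℝ] 𝔤 →L[ℝ] 𝔤)
    {f g : EuclideanSpace ℝ (Fin 3) → Fin 3 → 𝔤}
    (hf : ∀ ν : Fin 3, DifferentiableAt ℝ (fun z => f z ν) x)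
    (hg : ∀ ν : Fin 3, DifferentiableAt ℝ (fun z => g z ν) x) :
    div3 (fun y => crossBr br (f y) (g y)) x
      = dotBr br (curl3 f x) (g x) - dotBr br (f x) (curl3 g x) := by
  have key : ∀ μ : Fin 3, pderiv3 μ (fun y => crossBr br (f y) (g y) μ) x
      = ∑ ρ : Fin 3, ∑ ν : Fin 3, levicivita μ ρ ν •
          (br (pderiv3 μ (fun z => f z ρ) x) (g x ν)
            + br (f x ρ) (pderiv3 μ (fun z => g z ν) x)) := by
    intro μ
    have e1 : pderiv3 μ (fun y => crossBr br (f y) (g y) μ) x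
        = ∑ ρ : Fin 3, pderiv3 μ
            (fun y => ∑ ν : Fin 3, levicivita μ ρ ν • br (f y ρ) (g y ν)) x :=
      YM.pderiv3_sum Finset.univ
        (fun ρ y => ∑ ν : Fin 3, levicivita μ ρ ν • br (f y ρ) (g y ν))
        (fun ρ _ => DifferentiableAt.fun_sum fun ν _ =>
          (YM.diffAt_br br (hf ρ) (hg ν)).const_smul _) μ
    rw [e1]
    refine Finset.sum_congr rfl fun ρ _ => ?_
    have e2 : pderiv3 μ (fun y => ∑ ν : Fin 3, levicivita μ ρ ν • br (f y ρ) (g y ν)) x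
        = ∑ ν : Fin 3, pderiv3 μ (fun y => levicivita μ ρ ν • br (f y ρ) (g y ν)) x :=
      YM.pderiv3_sum Finset.univ
        (fun ν y => levicivita μ ρ ν • br (f y ρ) (g y ν))
        (fun ν _ => (YM.diffAt_br br (hf ρ) (hg ν)).const_smul _) μ
    rw [e2]
    refine Finset.sum_congr rfl fun ν _ => ?_
    rw [YM.pderiv3_smul (YM.diffAt_br br (hf ρ) (hg ν)) _ μ,
      YM.pderiv3_br br (hf ρ) (hg ν) μ]
  rw [div3]
  rw [Finset.sum_congr rfl fun μ _ => key μ]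
  simp only [dotBr, curl3, Fin.sum_univ_three, levicivita, map_sum, map_smul,
    ContinuousLinearMap.sum_apply, ContinuousLinearMap.smul_apply, smul_add]
  norm_num
  module

lemma YM.br_skew (br : 𝔤 →L[ℝ] 𝔤 →L[ℝ] 𝔤) (br_alt : ∀ a : 𝔤, br a a = 0) (a b : 𝔤) :
    br a b = - br b a := by
  have h := br_alt (a + b)
  simp only [map_add, ContinuousLinearMap.add_apply, br_alt] at h
  linear_combination (norm := module) h

/-- The core algebraic identity. -/
lemma YM.core_alg (br : 𝔤 →L[ℝ] 𝔤 →L[ℝ] 𝔤) (br_alt : ∀ a : 𝔤, br a a = 0)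
    (br_jacobi : ∀ a b c : 𝔤, br a (br b c) + br b (br c a) + br c (br a b) = 0)
    (v c : Fin 3 → 𝔤) :
    dotBr br c (fun α => c α + (1/2 : ℝ) • crossBr br v v α)
      + dotBr br v (crossBr br v (fun α => c α + (1/2 : ℝ) • crossBr br v v α)) = 0 := by
  have skew := YM.br_skew br br_alt
  simp only [dotBr, crossBr, Fin.sum_univ_three, levicivita]
  have J : ∀ a b d : 𝔤, br a (br b d) - br b (br a d) + br d (br a b) = 0 := by
    intro a b d
    have h2 : br b (br d a) = - br b (br a d) := by rw [skew d a, map_neg]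
    linear_combination (norm := module) br_jacobi a b d - h2
  have K : ∀ a b : 𝔤, br a (br b (br a b)) - br b (br a (br a b)) = 0 := by
    intro a b
    linear_combination (norm := module) J a b (br a b) - br_alt (br a b)
  have s10 : (br (v 1)) (v 0) = -((br (v 0)) (v 1)) := skew _ _
  have s20 : (br (v 2)) (v 0) = -((br (v 0)) (v 2)) := skew _ _
  have s21 : (br (v 2)) (v 1) = -((br (v 1)) (v 2)) := skew _ _
  norm_num [map_add, map_smul, map_sum, smul_add, smul_smul, s10, s20, s21, map_neg, smul_neg]
  linear_combination (norm := module) J (v 0) (v 1) (c 2) - J (v 0) (v 2) (c 1)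
    + J (v 1) (v 2) (c 0) + K (v 0) (v 1) + K (v 0) (v 2) + K (v 1) (v 2)
    + br_alt (c 0) + br_alt (c 1) + br_alt (c 2)

end YMAux

/-- preservation of the constraint `div E + ⋆[A,⋆E] = 0` by the
Yang–Mills evolution in temporal gauge. -/
theorem yangMills_constraint_preservation {𝔤 : Type*} [NormedAddCommGroup 𝔤]
    [NormedSpace ℝ 𝔤] [FiniteDimensional ℝ 𝔤]
    (br : 𝔤 →L[ℝ] 𝔤 →L[ℝ] 𝔤)
    (br_alt : ∀ a : 𝔤, br a a = 0)
    (br_jacobi : ∀ a b c : 𝔤, br a (br b c) + br b (br c a) + br c (br a b) = 0)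
    (U : Set (EuclideanSpace ℝ (Fin 3))) (hU : IsOpen U)
    (A E : ℝ → EuclideanSpace ℝ (Fin 3) → Fin 3 → 𝔤)
    (hA : ContDiffOn ℝ (⊤ : ℕ∞) (fun p : ℝ × EuclideanSpace ℝ (Fin 3) => A p.1 p.2)
      (Set.univ ×ˢ U))
    (hE : ContDiffOn ℝ (⊤ : ℕ∞) (fun p : ℝ × EuclideanSpace ℝ (Fin 3) => E p.1 p.2)
      (Set.univ ×ˢ U))
    (B : ℝ → EuclideanSpace ℝ (Fin 3) → Fin 3 → 𝔤)
    (hB : ∀ t : ℝ, B t = fun y α => curl3 (A t) y α + (1/2 : ℝ) • crossBr br (A t y) (A t y) α)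
    (hevolA : ∀ t : ℝ, ∀ x ∈ U, ∀ μ : Fin 3, deriv (fun s => A s x μ) t = - E t x μ)
    (hevolE : ∀ t : ℝ, ∀ x ∈ U, ∀ α : Fin 3,
      deriv (fun s => E s x α) t = curl3 (B t) x α + crossBr br (A t x) (B t x) α) :
    ∀ x ∈ U, ∀ t t' : ℝ,
      div3 (E t) x + dotBr br (A t x) (E t x)
        = div3 (E t') x + dotBr br (A t' x) (E t' x) := by
  intro x hx t t'
  have hV : IsOpen (Set.univ ×ˢ U : Set (ℝ × EuclideanSpace ℝ (Fin 3))) := isOpen_univ.prod hU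
  -- componentwise regularity
  have hAν : ∀ ν : Fin 3, ContDiffOn ℝ (⊤:ℕ∞)
      (fun p : ℝ × EuclideanSpace ℝ (Fin 3) => A p.1 p.2 ν) (Set.univ ×ˢ U) := fun ν =>
    (ContinuousLinearMap.proj (R := ℝ) (φ := fun _ : Fin 3 => 𝔤) ν).contDiff.comp_contDiffOn hA
  have hEν : ∀ ν : Fin 3, ContDiffOn ℝ (⊤:ℕ∞)
      (fun p : ℝ × EuclideanSpace ℝ (Fin 3) => E p.1 p.2 ν) (Set.univ ×ˢ U) := fun ν =>
    (ContinuousLinearMap.proj (R := ℝ) (φ := fun _ : Fin 3 => 𝔤) ν).contDiff.comp_contDiffOn hE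
  have hAat : ∀ τ : ℝ, ∀ y ∈ U, ∀ ν : Fin 3,
      ContDiffAt ℝ (⊤:ℕ∞) (fun z => A τ z ν) y := by
    intro τ y hy ν
    have h1 : ContDiffAt ℝ (⊤:ℕ∞) (fun p : ℝ × EuclideanSpace ℝ (Fin 3) => A p.1 p.2 ν)
        (τ, y) := (hAν ν).contDiffAt (hV.mem_nhds (by simp [hy]))
    have h2 : ContDiffAt ℝ (⊤:ℕ∞) (fun z : EuclideanSpace ℝ (Fin 3) => ((τ:ℝ), z)) y :=
      contDiffAt_const.prodMk contDiffAt_id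
    exact h1.comp y h2
  have hEat : ∀ τ : ℝ, ∀ y ∈ U, ∀ ν : Fin 3,
      ContDiffAt ℝ (⊤:ℕ∞) (fun z => E τ z ν) y := by
    intro τ y hy ν
    have h1 : ContDiffAt ℝ (⊤:ℕ∞) (fun p : ℝ × EuclideanSpace ℝ (Fin 3) => E p.1 p.2 ν)
        (τ, y) := (hEν ν).contDiffAt (hV.mem_nhds (by simp [hy]))
    have h2 : ContDiffAt ℝ (⊤:ℕ∞) (fun z : EuclideanSpace ℝ (Fin 3) => ((τ:ℝ), z)) y :=
      contDiffAt_const.prodMk contDiffAt_id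
    exact h1.comp y h2
  -- regularity of B
  have hBat : ∀ τ : ℝ, ∀ y ∈ U, ∀ ν : Fin 3,
      ContDiffAt ℝ (⊤:ℕ∞) (fun z => B τ z ν) y := by
    intro τ y hy ν
    have : (fun z => B τ z ν)
        = fun z => curl3 (A τ) z ν + (1/2 : ℝ) • crossBr br (A τ z) (A τ z) ν := by
      funext z; rw [hB τ]
    rw [this]
    refine ContDiffAt.add ?_ (ContDiffAt.const_smul _ ?_)
    · -- curl component
      refine ContDiffAt.sum fun ρ _ => ContDiffAt.sum fun σ _ => ContDiffAt.const_smul _ ?_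
      exact YM.contDiffAt_pderiv3 (hAat τ y hy σ) ρ
    · refine ContDiffAt.sum fun ρ _ => ContDiffAt.sum fun σ _ => ContDiffAt.const_smul _ ?_
      exact YM.contDiffAt_br br (hAat τ y hy ρ) (hAat τ y hy σ)
  -- the constraint function
  set φ : ℝ → 𝔤 := fun s => div3 (E s) x + dotBr br (A s x) (E s x) with hφ
  suffices h : ∀ τ : ℝ, HasDerivAt φ 0 τ by
    exact is_const_of_deriv_eq_zero (fun s => (h s).differentiableAt) (fun s => (h s).deriv) t t'
  intro τ
  -- time derivatives of the pointwise values
  have hAd : ∀ α : Fin 3, HasDerivAt (fun s => A s x α) (- E τ x α) τ := by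
    intro α
    have hd : DifferentiableAt ℝ (fun p : ℝ × EuclideanSpace ℝ (Fin 3) => A p.1 p.2 α)
        (τ, x) := ((hAν α).contDiffAt (hV.mem_nhds (by simp [hx]))).differentiableAt
        (by simp)
    have h1 : HasDerivAt (fun s => A s x α) (deriv (fun s => A s x α) τ) τ := by
      have := YM.hasDerivAt_slice hd
      exact this.deriv ▸ this
    rwa [hevolA τ x hx α] at h1
  have hEd : ∀ α : Fin 3, HasDerivAt (fun s => E s x α)
      (curl3 (B τ) x α + crossBr br (A τ x) (B τ x) α) τ := by
    intro α
    have hd : DifferentiableAt ℝ (fun p : ℝ × EuclideanSpace ℝ (Fin 3) => E p.1 p.2 α)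
        (τ, x) := ((hEν α).contDiffAt (hV.mem_nhds (by simp [hx]))).differentiableAt
        (by simp)
    have h1 : HasDerivAt (fun s => E s x α) (deriv (fun s => E s x α) τ) τ := by
      have := YM.hasDerivAt_slice hd
      exact this.deriv ▸ this
    rwa [hevolE τ x hx α] at h1
  -- time derivative of the divergence term
  have hdivd : ∀ μ : Fin 3, HasDerivAt (fun s => pderiv3 μ (fun y => E s y μ) x)
      (pderiv3 μ (fun y => curl3 (B τ) y μ + crossBr br (A τ y) (B τ y) μ) x) τ := by
    intro μ
    have h1 := YM.hasDerivAt_pderiv3_slice hU (hEν μ) hx τ μ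
    have hev : (fun y => deriv (fun s => E s y μ) τ) =ᶠ[nhds x]
        (fun y => curl3 (B τ) y μ + crossBr br (A τ y) (B τ y) μ) := by
      filter_upwards [hU.mem_nhds hx] with y hy
      exact hevolE τ y hy μ
    rwa [YM.pderiv3_congr_nhds hev μ] at h1
  -- total derivative of φ
  have hφd : HasDerivAt φ
      ((∑ μ : Fin 3, pderiv3 μ (fun y => curl3 (B τ) y μ + crossBr br (A τ y) (B τ y) μ) x)
        + ∑ α : Fin 3, (br (- E τ x α) (E τ x α)
            + br (A τ x α) (curl3 (B τ) x α + crossBr br (A τ x) (B τ x) α))) τ := by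
    refine HasDerivAt.add ?_ ?_
    · exact HasDerivAt.fun_sum fun μ _ => hdivd μ
    · refine HasDerivAt.fun_sum fun α _ => ?_
      have hc : HasDerivAt (fun s => br (A s x α)) (br (- E τ x α)) τ :=
        br.hasFDerivAt.comp_hasDerivAt τ (hAd α)
      exact hc.clm_apply (hEd α)
  -- the derivative vanishes
  have hzero :
      ((∑ μ : Fin 3, pderiv3 μ (fun y => curl3 (B τ) y μ + crossBr br (A τ y) (B τ y) μ) x)
        + ∑ α : Fin 3, (br (- E τ x α) (E τ x α)
            + br (A τ x α) (curl3 (B τ) x α + crossBr br (A τ x) (B τ x) α))) = 0 := by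
    -- differentiability of the two spatial summands
    have hcurlB_diff : ∀ μ : Fin 3, DifferentiableAt ℝ (fun y => curl3 (B τ) y μ) x := by
      intro μ
      refine (DifferentiableAt.fun_sum fun ρ _ => DifferentiableAt.fun_sum fun σ _ =>
        DifferentiableAt.const_smul ?_ _)
      exact (YM.contDiffAt_pderiv3 (hBat τ x hx σ) ρ).differentiableAt (by simp)
    have hcross_diff : ∀ μ : Fin 3,
        DifferentiableAt ℝ (fun y => crossBr br (A τ y) (B τ y) μ) x := by
      intro μ
      refine (DifferentiableAt.fun_sum fun ρ _ => DifferentiableAt.fun_sum fun σ _ =>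
        DifferentiableAt.const_smul ?_ _)
      exact YM.diffAt_br br ((hAat τ x hx ρ).differentiableAt (by simp))
        ((hBat τ x hx σ).differentiableAt (by simp))
    have e1 : (∑ μ : Fin 3,
        pderiv3 μ (fun y => curl3 (B τ) y μ + crossBr br (A τ y) (B τ y) μ) x)
        = div3 (curl3 (B τ)) x + div3 (fun y => crossBr br (A τ y) (B τ y)) x := by
      rw [div3, div3, ← Finset.sum_add_distrib]
      refine Finset.sum_congr rfl fun μ _ => ?_
      exact YM.pderiv3_add (hcurlB_diff μ) (hcross_diff μ) μ
    have e2 : div3 (curl3 (B τ)) x = 0 := YM.div3_curl3 hU hx (fun ν y hy => hBat τ y hy ν)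
    have e3 : div3 (fun y => crossBr br (A τ y) (B τ y)) x
        = dotBr br (curl3 (A τ) x) (B τ x) - dotBr br (A τ x) (curl3 (B τ) x) :=
      YM.div3_crossBr br (fun ν => (hAat τ x hx ν).differentiableAt (by simp))
        (fun ν => (hBat τ x hx ν).differentiableAt (by simp))
    have e4 : (∑ α : Fin 3, (br (- E τ x α) (E τ x α)
        + br (A τ x α) (curl3 (B τ) x α + crossBr br (A τ x) (B τ x) α)))
        = dotBr br (A τ x) (curl3 (B τ) x)
          + dotBr br (A τ x) (crossBr br (A τ x) (B τ x)) := by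
      simp only [map_neg, ContinuousLinearMap.neg_apply, br_alt, neg_zero, zero_add, map_add,
        dotBr, Finset.sum_add_distrib]
    rw [e1, e2, e3, e4]
    have e5 : B τ x = fun α => curl3 (A τ) x α
        + (1/2 : ℝ) • crossBr br (A τ x) (A τ x) α := by rw [hB τ]
    rw [e5]
    have := YM.core_alg br br_alt br_jacobi (A τ x) (curl3 (A τ) x)
    linear_combination (norm := module) this
  rw [hzero] at hφd
  exact hφd
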